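/- arXiv:1112.4911 — 2 statements merged into one kernel-verified Lean document; each statement's English description precedes it below -/
import Mathlib

section
/- For every real x > 0, the sum over n ≥ 1 of λ(n)/(e^{nπx} + 1) equals φ(x) − 2φ(2x), where φ(x) = Σ_{k≥1} e^{−k²πx}. -/
open Real

/-- The Liouville function `λ(n) = (-1)^Ω(n)`. -/
def liouville (n : ℕ) : ℤ := (-1) ^ n.primeFactorsList.length

noncomputable def phi (x : ℝ) : ℝ := ∑' k : ℕ, Real.exp (-((k : ℝ) + 1) ^ 2 * π * x)

/-! ### Arithmetic part -/

open ArithmeticFunction in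
noncomputable def lamAF : ArithmeticFunction ℤ :=
  ⟨fun n => if n = 0 then 0 else _root_.liouville n, if_pos rfl⟩

lemma lamAF_apply {n : ℕ} (hn : n ≠ 0) : lamAF n = liouville n := if_neg hn

lemma liouville_one : liouville 1 = 1 := by simp [liouville]

open ArithmeticFunction in
lemma liouville_mul {m n : ℕ} (hm : m ≠ 0) (hn : n ≠ 0) :
    _root_.liouville (m * n) = _root_.liouville m * _root_.liouville n := by
  unfold _root_.liouville
  rw [← pow_add]
  congr 1
  simp only [← ArithmeticFunction.cardFactors_apply]
  exact ArithmeticFunction.cardFactors_mul hm hn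

lemma lamAF_mult : lamAF.IsMultiplicative := by
  rw [ArithmeticFunction.IsMultiplicative.iff_ne_zero]
  refine ⟨by rw [lamAF_apply one_ne_zero, liouville_one], fun hm hn _ => ?_⟩
  rw [lamAF_apply (mul_ne_zero hm hn), lamAF_apply hm, lamAF_apply hn, liouville_mul hm hn]

open ArithmeticFunction in
noncomputable def DD : ArithmeticFunction ℤ := lamAF * (zeta : ArithmeticFunction ℕ)

open ArithmeticFunction in
lemma DD_mult : DD.IsMultiplicative := lamAF_mult.mul isMultiplicative_zeta.natCast

open ArithmeticFunction in
lemma DD_prime_pow {p k : ℕ} (hp : p.Prime) : DD (p ^ k) = if Even k then 1 else 0 := by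
  rw [DD, coe_mul_zeta_apply, Nat.sum_divisors_prime_pow hp]
  have h : ∀ i, (lamAF (p ^ i) : ℤ) = (-1) ^ i := by
    intro i
    rw [lamAF_apply (pow_ne_zero _ hp.pos.ne'), _root_.liouville]
    congr 1
    rw [← ArithmeticFunction.cardFactors_apply]
    exact cardFactors_apply_prime_pow hp
  simp_rw [h]
  rw [neg_one_geom_sum]
  by_cases hk : Even k <;> simp [hk, Nat.even_add_one]

lemma DD_sq (M : ℕ) (hM : M ≠ 0) : DD (M ^ 2) = 1 := by
  rw [ArithmeticFunction.IsMultiplicative.multiplicative_factorization DD DD_mult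
    (pow_ne_zero 2 hM), Finsupp.prod]
  apply Finset.prod_eq_one
  intro p hp
  have hprime : p.Prime := Nat.prime_of_mem_primeFactors (by
    rwa [Nat.support_factorization] at hp)
  rw [DD_prime_pow hprime, if_pos]
  rw [Nat.factorization_pow, Finsupp.smul_apply, smul_eq_mul]
  exact even_two_mul _

lemma DD_eq_zero (N : ℕ) (hN : N ≠ 0) (h : ∀ r : ℕ, N ≠ r ^ 2) : DD N = 0 := by
  by_contra hD
  have heven : ∀ p ∈ N.primeFactors, Even (N.factorization p) := by
    intro p hp
    by_contra hodd
    apply hD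
    rw [ArithmeticFunction.IsMultiplicative.multiplicative_factorization DD DD_mult hN,
      Finsupp.prod]
    apply Finset.prod_eq_zero (i := p) (by rwa [Nat.support_factorization])
    rw [DD_prime_pow (Nat.prime_of_mem_primeFactors hp), if_neg hodd]
  apply h (N.factorization.prod fun p e => p ^ (e / 2))
  conv_lhs => rw [← Nat.factorization_prod_pow_eq_self hN]
  rw [Finsupp.prod, Finsupp.prod, ← Finset.prod_pow]
  apply Finset.prod_congr rfl
  intro p hp
  rw [← pow_mul, Nat.div_mul_cancel]
  exact (heven p (by rwa [Nat.support_factorization] at hp)).two_dvd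

lemma S_eq (N : ℕ) (hN : N ≠ 0) :
    ∑ q ∈ N.divisorsAntidiagonal, liouville q.1 = DD N := by
  rw [DD, ArithmeticFunction.mul_apply]
  apply Finset.sum_congr rfl
  intro q hq
  obtain ⟨h1, -⟩ := Nat.mem_divisorsAntidiagonal.mp hq
  have hq1 : q.1 ≠ 0 := left_ne_zero_of_mul (h1 ▸ hN)
  have hq2 : q.2 ≠ 0 := right_ne_zero_of_mul (h1 ▸ hN)
  rw [lamAF_apply hq1, ArithmeticFunction.natCoe_apply, ArithmeticFunction.zeta_apply_ne hq2,
    Nat.cast_one, mul_one]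

/-! ### Summability -/

lemma liouville_abs (n : ℕ) : |(liouville n : ℝ)| = 1 := by
  rw [liouville]
  push_cast
  rw [abs_pow, abs_neg, abs_one, one_pow]

lemma summable_exp_pair {c : ℝ} (hc : 0 < c) :
    Summable fun p : ℕ × ℕ => Real.exp (-(((p.1 + 1) * (p.2 + 1) : ℕ) : ℝ) * c) := by
  have h1 : Summable fun n : ℕ => Real.exp (-(n : ℝ) * c) := by
    have := Real.summable_exp_nat_mul_iff (a := -c) |>.mpr (neg_neg_of_pos hc)
    refine this.congr fun n => ?_
    ring_nf
  have h2 : Summable fun p : ℕ × ℕ => Real.exp (-(p.1 : ℝ) * c) * Real.exp (-(p.2 : ℝ) * c) := by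
    apply summable_mul_of_summable_norm (f := fun n : ℕ => Real.exp (-(n : ℝ) * c))
      (g := fun n : ℕ => Real.exp (-(n : ℝ) * c)) <;>
    · refine h1.congr fun n => ?_
      rw [Real.norm_eq_abs, abs_of_pos (Real.exp_pos _)]
  apply h2.of_nonneg_of_le (fun _ => (Real.exp_pos _).le)
  intro p
  rw [← Real.exp_add]
  apply Real.exp_le_exp.mpr
  push_cast
  nlinarith [mul_nonneg (mul_nonneg (Nat.cast_nonneg (α := ℝ) p.1)
    (Nat.cast_nonneg (α := ℝ) p.2)) hc.le, hc.le]

lemma summable_f {c : ℝ} (hc : 0 < c) :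
    Summable fun p : ℕ × ℕ =>
      (liouville (p.1 + 1) : ℝ) * Real.exp (-(((p.1 + 1) * (p.2 + 1) : ℕ) : ℝ) * c) := by
  apply Summable.of_norm
  refine (summable_exp_pair hc).congr fun p => ?_
  rw [norm_mul, Real.norm_eq_abs, Real.norm_eq_abs, liouville_abs, one_mul,
    abs_of_pos (Real.exp_pos _)]

/-! ### The key fiberwise identity -/

lemma key {c : ℝ} (hc : 0 < c) :
    ∑' p : ℕ × ℕ, (liouville (p.1 + 1) : ℝ) * Real.exp (-(((p.1 + 1) * (p.2 + 1) : ℕ) : ℝ) * c)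
      = ∑' k : ℕ, Real.exp (-((((k + 1) ^ 2 : ℕ)) : ℝ) * c) := by
  set f : ℕ × ℕ → ℝ := fun p =>
    (liouville (p.1 + 1) : ℝ) * Real.exp (-(((p.1 + 1) * (p.2 + 1) : ℕ) : ℝ) * c) with hfdef
  set g : ℕ → ℝ :=
    fun N => ∑' p : (fun p : ℕ × ℕ => (p.1 + 1) * (p.2 + 1)) ⁻¹' {N}, f p with hgdef
  have hfib : HasSum g (∑' p, f p) :=
    (summable_f hc).hasSum.tsum_fiberwise (fun p : ℕ × ℕ => (p.1 + 1) * (p.2 + 1))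
  have hgN : ∀ N : ℕ, N ≠ 0 → g N = (DD N : ℝ) * Real.exp (-(N : ℝ) * c) := by
    intro N hN
    have hset : (fun p : ℕ × ℕ => (p.1 + 1) * (p.2 + 1)) ⁻¹' {N}
        = ↑((N.divisorsAntidiagonal).image fun q => (q.1 - 1, q.2 - 1)) := by
      ext p
      simp only [Set.mem_preimage, Set.mem_singleton_iff, Finset.coe_image, Set.mem_image,
        Finset.mem_coe, Nat.mem_divisorsAntidiagonal]
      constructor
      · intro h
        exact ⟨(p.1 + 1, p.2 + 1), ⟨h, hN⟩, by simp⟩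
      · rintro ⟨⟨a, b⟩, ⟨hab, -⟩, rfl⟩
        have ha : a ≠ 0 := left_ne_zero_of_mul (hab ▸ hN)
        have hb : b ≠ 0 := right_ne_zero_of_mul (hab ▸ hN)
        simp only []
        rw [Nat.sub_add_cancel (Nat.one_le_iff_ne_zero.mpr ha),
          Nat.sub_add_cancel (Nat.one_le_iff_ne_zero.mpr hb)]
        exact hab
    rw [hgdef]
    beta_reduce
    rw [hset]
    rw [Finset.tsum_subtype' ((N.divisorsAntidiagonal).image fun q => (q.1 - 1, q.2 - 1)) f]
    rw [Finset.sum_image (f := f)]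
    · have hterm : ∀ q ∈ N.divisorsAntidiagonal,
          f (q.1 - 1, q.2 - 1) = (liouville q.1 : ℝ) * Real.exp (-(N : ℝ) * c) := by
        intro q hq
        obtain ⟨h1, -⟩ := Nat.mem_divisorsAntidiagonal.mp hq
        have hq1 : q.1 ≠ 0 := left_ne_zero_of_mul (h1 ▸ hN)
        have hq2 : q.2 ≠ 0 := right_ne_zero_of_mul (h1 ▸ hN)
        rw [hfdef]
        simp only []
        rw [Nat.sub_add_cancel (Nat.one_le_iff_ne_zero.mpr hq1),
          Nat.sub_add_cancel (Nat.one_le_iff_ne_zero.mpr hq2), h1]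
      rw [Finset.sum_congr rfl hterm, ← Finset.sum_mul, ← Int.cast_sum, S_eq N hN]
    · intro q hq q' hq' h
      obtain ⟨h1, -⟩ := Nat.mem_divisorsAntidiagonal.mp hq
      obtain ⟨h1', -⟩ := Nat.mem_divisorsAntidiagonal.mp hq'
      have := left_ne_zero_of_mul (h1 ▸ hN)
      have := right_ne_zero_of_mul (h1 ▸ hN)
      have := left_ne_zero_of_mul (h1' ▸ hN)
      have := right_ne_zero_of_mul (h1' ▸ hN)
      have h2 := congrArg Prod.fst h
      have h3 := congrArg Prod.snd h
      simp only [] at h2 h3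
      ext <;> omega
  have hg0 : g 0 = 0 := by
    have hempty : (fun p : ℕ × ℕ => (p.1 + 1) * (p.2 + 1)) ⁻¹' {0} = (∅ : Set (ℕ × ℕ)) := by
      ext ⟨p1, p2⟩
      simp [Nat.mul_eq_zero]
    rw [hgdef]
    beta_reduce
    rw [hempty, tsum_empty]
  rw [← hfib.tsum_eq]
  rw [← Function.Injective.tsum_eq (g := fun k : ℕ => (k + 1) ^ 2) (f := g) ?_ ?_]
  · apply tsum_congr
    intro k
    rw [hgN _ (by positivity), DD_sq _ (Nat.succ_ne_zero k)]
    push_cast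
    ring_nf
  · intro a b h
    simpa using Nat.pow_left_injective (by norm_num) h
  · intro N hN
    simp only [Function.mem_support] at hN
    rcases eq_or_ne N 0 with rfl | hN0
    · exact absurd hg0 hN
    · by_contra hmem
      apply hN
      rw [hgN N hN0, DD_eq_zero N hN0, Int.cast_zero, zero_mul]
      intro r hr
      apply hmem
      have hr0 : r ≠ 0 := by rintro rfl; rw [hr] at hN0; simp at hN0
      refine ⟨r - 1, ?_⟩
      show (r - 1 + 1) ^ 2 = N
      rw [Nat.sub_add_cancel (Nat.one_le_iff_ne_zero.mpr hr0), ← hr]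

/-! ### Geometric series and alternating split -/

lemma geom_inv {y : ℝ} (hy : 0 < y) :
    (Real.exp y + 1)⁻¹ = ∑' m : ℕ, (-1 : ℝ) ^ m * Real.exp (-((m : ℝ) + 1) * y) := by
  have hr1 : Real.exp (-y) < 1 := Real.exp_lt_one_iff.mpr (neg_neg_of_pos hy)
  have hterm : ∀ m : ℕ, (-1 : ℝ) ^ m * Real.exp (-((m : ℝ) + 1) * y)
      = Real.exp (-y) * (-(Real.exp (-y))) ^ m := by
    intro m
    rw [neg_pow, show -((m : ℝ) + 1) * y = -y + m * (-y) by ring, Real.exp_add,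
      Real.exp_nat_mul]
    ring
  rw [tsum_congr hterm, tsum_mul_left, tsum_geometric_of_norm_lt_one
    (by rw [norm_neg, Real.norm_eq_abs, abs_of_pos (Real.exp_pos _)]; exact hr1),
    sub_neg_eq_add, Real.exp_neg]
  have hE : (0 : ℝ) < Real.exp y := Real.exp_pos _
  field_simp

lemma summable_alt {y : ℝ} (hy : 0 < y) :
    Summable fun m : ℕ => (-1 : ℝ) ^ m * Real.exp (-((m : ℝ) + 1) * y) := by
  have hr1 : Real.exp (-y) < 1 := Real.exp_lt_one_iff.mpr (neg_neg_of_pos hy)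
  have hterm : ∀ m : ℕ, (-1 : ℝ) ^ m * Real.exp (-((m : ℝ) + 1) * y)
      = Real.exp (-y) * (-(Real.exp (-y))) ^ m := by
    intro m
    rw [neg_pow, show -((m : ℝ) + 1) * y = -y + m * (-y) by ring, Real.exp_add,
      Real.exp_nat_mul]
    ring
  exact ((summable_geometric_of_norm_lt_one
    (by rw [norm_neg, Real.norm_eq_abs, abs_of_pos (Real.exp_pos _)]; exact hr1)).mul_left
      (Real.exp (-y))).congr fun m => (hterm m).symm

lemma summable_A {y : ℝ} (hy : 0 < y) :
    Summable fun m : ℕ => Real.exp (-((m : ℝ) + 1) * y) := by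
  have hr1 : Real.exp (-y) < 1 := Real.exp_lt_one_iff.mpr (neg_neg_of_pos hy)
  have hterm : ∀ m : ℕ, Real.exp (-((m : ℝ) + 1) * y) = Real.exp (-y) * (Real.exp (-y)) ^ m := by
    intro m
    rw [show -((m : ℝ) + 1) * y = -y + m * (-y) by ring, Real.exp_add, Real.exp_nat_mul]
  exact ((summable_geometric_of_lt_one (Real.exp_pos _).le hr1).mul_left
    (Real.exp (-y))).congr fun m => (hterm m).symm

lemma alt_split {y : ℝ} (hy : 0 < y) :
    ∑' m : ℕ, (-1 : ℝ) ^ m * Real.exp (-((m : ℝ) + 1) * y)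
      = (∑' m : ℕ, Real.exp (-((m : ℝ) + 1) * y))
        - 2 * ∑' k : ℕ, Real.exp (-((k : ℝ) + 1) * (2 * y)) := by
  set f : ℕ → ℝ := fun m => (-1 : ℝ) ^ m * Real.exp (-((m : ℝ) + 1) * y) with hf
  set A : ℕ → ℝ := fun m => Real.exp (-((m : ℝ) + 1) * y) with hA
  have hinj2 : Function.Injective fun k : ℕ => 2 * k := fun a b h => by
    simp only [] at h; omega
  have hinj2' : Function.Injective fun k : ℕ => 2 * k + 1 := fun a b h => by
    simp only [] at h; omega
  have hfs := summable_alt hy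
  have hAs := summable_A hy
  have he : Summable fun k => f (2 * k) := hfs.comp_injective hinj2
  have ho : Summable fun k => f (2 * k + 1) := hfs.comp_injective hinj2'
  have hAe : Summable fun k => A (2 * k) := hAs.comp_injective hinj2
  have hAo : Summable fun k => A (2 * k + 1) := hAs.comp_injective hinj2'
  have h1 : ∑' k, f (2 * k) = ∑' k, A (2 * k) := by
    apply tsum_congr; intro k
    rw [hf, hA]; push_cast; rw [pow_mul]; norm_num
  have h2 : ∑' k, f (2 * k + 1) = -∑' k, A (2 * k + 1) := by
    rw [← tsum_neg]
    apply tsum_congr; intro k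
    rw [hf, hA]; push_cast; rw [pow_succ, pow_mul]; norm_num
  have h3 : ∑' k, A (2 * k + 1) = ∑' k : ℕ, Real.exp (-((k : ℝ) + 1) * (2 * y)) := by
    apply tsum_congr; intro k
    rw [hA]; push_cast; ring_nf
  have hsplitf := tsum_even_add_odd he ho
  have hsplitA := tsum_even_add_odd hAe hAo
  rw [← h3, ← hsplitf, ← hsplitA, h1, h2]
  ring

/-! ### Main theorem -/

theorem liouville_plus_one_sum (x : ℝ) (hx : 0 < x) :
    ∑' n : ℕ, (liouville (n + 1) : ℝ) / (Real.exp (((n : ℝ) + 1) * π * x) + 1) =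
      phi x - 2 * phi (2 * x) := by
  set c : ℝ := π * x with hcdef
  have hc : 0 < c := mul_pos Real.pi_pos hx
  have hterm : ∀ n : ℕ, (liouville (n + 1) : ℝ) / (Real.exp (((n : ℝ) + 1) * π * x) + 1)
      = (liouville (n + 1) : ℝ) * (∑' m : ℕ, Real.exp (-(((n + 1) * (m + 1) : ℕ) : ℝ) * c))
        - 2 * ((liouville (n + 1) : ℝ)
          * ∑' m : ℕ, Real.exp (-(((n + 1) * (m + 1) : ℕ) : ℝ) * (2 * c))) := by
    intro n
    have hy : (0 : ℝ) < ((n : ℝ) + 1) * c := by positivity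
    have hyx : ((n : ℝ) + 1) * π * x = ((n : ℝ) + 1) * c := by rw [hcdef]; ring
    rw [div_eq_mul_inv, hyx, geom_inv hy, alt_split hy]
    have e1 : ∑' m : ℕ, Real.exp (-((m : ℝ) + 1) * (((n : ℝ) + 1) * c))
        = ∑' m : ℕ, Real.exp (-(((n + 1) * (m + 1) : ℕ) : ℝ) * c) := by
      apply tsum_congr; intro m; congr 1; push_cast; ring
    have e2 : ∑' m : ℕ, Real.exp (-((m : ℝ) + 1) * (2 * (((n : ℝ) + 1) * c)))
        = ∑' m : ℕ, Real.exp (-(((n + 1) * (m + 1) : ℕ) : ℝ) * (2 * c)) := by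
      apply tsum_congr; intro m; congr 1; push_cast; ring
    rw [e1, e2]
    ring
  rw [tsum_congr hterm]
  have hSa : Summable fun n : ℕ => (liouville (n + 1) : ℝ)
      * ∑' m : ℕ, Real.exp (-(((n + 1) * (m + 1) : ℕ) : ℝ) * c) := by
    refine (summable_f hc).prod.congr fun n => ?_
    simp only []
    rw [tsum_mul_left]
  have hSb : Summable fun n : ℕ => (liouville (n + 1) : ℝ)
      * ∑' m : ℕ, Real.exp (-(((n + 1) * (m + 1) : ℕ) : ℝ) * (2 * c)) := by
    refine (summable_f (by positivity : (0:ℝ) < 2 * c)).prod.congr fun n => ?_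
    simp only []
    rw [tsum_mul_left]
  rw [Summable.tsum_sub hSa (hSb.mul_left 2), tsum_mul_left]
  have hkey : ∀ {d : ℝ}, 0 < d →
      (∑' n : ℕ, (liouville (n + 1) : ℝ)
        * ∑' m : ℕ, Real.exp (-(((n + 1) * (m + 1) : ℕ) : ℝ) * d))
      = ∑' k : ℕ, Real.exp (-((((k + 1) ^ 2 : ℕ)) : ℝ) * d) := by
    intro d hd
    rw [← key hd, Summable.tsum_prod' (summable_f hd) ?_]
    · apply tsum_congr; intro n
      simp only []
      rw [tsum_mul_left]
    · exact fun b => (summable_f hd).prod_factor b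
  rw [hkey hc, hkey (by positivity : (0:ℝ) < 2 * c)]
  have hphi1 : phi x = ∑' k : ℕ, Real.exp (-((((k + 1) ^ 2 : ℕ)) : ℝ) * c) := by
    apply tsum_congr; intro k; congr 1; push_cast; ring
  have hphi2 : phi (2 * x) = ∑' k : ℕ, Real.exp (-((((k + 1) ^ 2 : ℕ)) : ℝ) * (2 * c)) := by
    apply tsum_congr; intro k; congr 1; push_cast; ring
  rw [hphi1, hphi2]
end

section
/- For complex x with |x| < 1, Σ_{n≥1} μ(n)·x^n/(x^n + 1) = x − 2x². -/
open ArithmeticFunction Set Finset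

lemma moebius_norm_le_one (n : ℕ) : ‖(ArithmeticFunction.moebius n : ℂ)‖ ≤ 1 := by
  rcases ArithmeticFunction.moebius_eq_or n with h | h | h <;> simp [h]

lemma moebius_summable_aux (x : ℂ) (hx : ‖x‖ < 1) :
    Summable (fun n : ℕ ↦ (ArithmeticFunction.moebius n : ℂ) * x ^ n / (1 - x ^ n)) := by
  have h1 : (0:ℝ) < 1 - ‖x‖ := by linarith
  refine Summable.of_norm (Summable.of_nonneg_of_le (fun n ↦ norm_nonneg _)
    (f := fun n ↦ ‖x‖ ^ n * (1 - ‖x‖)⁻¹) (fun n ↦ ?_)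
    ((summable_geometric_of_norm_lt_one (by simpa using hx : ‖‖x‖‖ < 1)).mul_right _))
  rcases Nat.eq_zero_or_pos n with rfl | hn
  · simp only [ArithmeticFunction.map_zero, Int.cast_zero, pow_zero, zero_mul, zero_div,
      norm_zero, mul_one, one_mul]
    positivity
  · have hxn : ‖x ^ n‖ ≤ ‖x‖ := by
      rw [norm_pow]
      exact pow_le_of_le_one (norm_nonneg x) hx.le hn.ne'
    have hne : 1 - ‖x‖ ≤ ‖1 - x ^ n‖ := by
      have := norm_sub_norm_le (1 : ℂ) (x ^ n)
      simp only [norm_one] at this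
      linarith
    rw [norm_div, norm_mul, norm_pow]
    have hxpow : (0:ℝ) ≤ ‖x‖ ^ n := by positivity
    have h2 : ‖(ArithmeticFunction.moebius n : ℂ)‖ * ‖x‖ ^ n ≤ ‖x‖ ^ n := by
      nlinarith [moebius_norm_le_one n]
    calc ‖(ArithmeticFunction.moebius n : ℂ)‖ * ‖x‖ ^ n / ‖1 - x ^ n‖
        ≤ ‖x‖ ^ n / (1 - ‖x‖) := div_le_div₀ hxpow h2 h1 hne
      _ = ‖x‖ ^ n * (1 - ‖x‖)⁻¹ := div_eq_mul_inv _ _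

lemma moebius_lambert (x : ℂ) (hx : ‖x‖ < 1) :
    ∑' n : ℕ, (ArithmeticFunction.moebius n : ℂ) * x ^ n / (1 - x ^ n) = x := by
  rcases eq_or_ne x 0 with rfl | hx0
  · rw [show (0:ℂ) = ∑' _ : ℕ, (0:ℂ) from tsum_zero.symm]
    refine tsum_congr fun n ↦ ?_
    rcases n with - | n <;> simp
  have hr0 : 0 < ‖x‖ := norm_pos_iff.mpr hx0
  set F : ℕ × ℕ → ℂ := fun p ↦ if p.2 = 0 then 0 else
    (ArithmeticFunction.moebius p.1 : ℂ) * x ^ (p.1 * p.2) with hF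
  have hFsum : Summable F := by
    refine Summable.of_norm (Summable.of_nonneg_of_le (fun p ↦ norm_nonneg _)
      (f := fun p : ℕ × ℕ ↦ ‖x‖ ^ p.1 * ‖x‖ ^ p.2 * ‖x‖⁻¹) (fun p ↦ ?_) ?_)
    · obtain ⟨n, k⟩ := p
      rcases Nat.eq_zero_or_pos k with rfl | hk
      · simp only [hF, if_pos rfl, norm_zero]
        positivity
      rcases Nat.eq_zero_or_pos n with rfl | hn
      · simp only [hF, ArithmeticFunction.map_zero, Int.cast_zero, zero_mul, ite_self, norm_zero]
        positivity
      obtain ⟨a, rfl⟩ : ∃ a, n = a + 1 := ⟨n - 1, by omega⟩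
      obtain ⟨b, rfl⟩ : ∃ b, k = b + 1 := ⟨k - 1, by omega⟩
      have hle : a + 1 + (b + 1) - 1 ≤ (a + 1) * (b + 1) := by
        have : (a + 1) * (b + 1) = a * b + a + b + 1 := by ring
        omega
      set n := a + 1 with hn'
      set k := b + 1 with hk'
      have h1 : ‖F (n, k)‖ ≤ ‖x‖ ^ (n * k) := by
        simp only [hF, if_neg hk.ne', norm_mul, norm_pow]
        nlinarith [moebius_norm_le_one n, pow_nonneg (norm_nonneg x) (n * k)]
      have h2 : ‖x‖ ^ (n * k) ≤ ‖x‖ ^ (n + k - 1) :=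
        pow_le_pow_of_le_one (norm_nonneg x) hx.le hle
      have h3 : ‖x‖ ^ (n + k - 1) = ‖x‖ ^ n * ‖x‖ ^ k * ‖x‖⁻¹ := by
        have h4 : ‖x‖ ^ (n + k - 1) * ‖x‖ = ‖x‖ ^ n * ‖x‖ ^ k := by
          have he : n + k - 1 + 1 = n + k := by omega
          rw [← pow_succ, he, pow_add]
        rw [← h4, mul_assoc, mul_inv_cancel₀ hr0.ne', mul_one]
      linarith [h1, h2]
    · exact (((summable_geometric_of_norm_lt_one (by simpa using hx : ‖‖x‖‖ < 1)).mul_of_nonneg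
        (summable_geometric_of_norm_lt_one (by simpa using hx : ‖‖x‖‖ < 1))
        (fun n ↦ by positivity) (fun n ↦ by positivity))).mul_right _
  calc ∑' n : ℕ, (ArithmeticFunction.moebius n : ℂ) * x ^ n / (1 - x ^ n)
      = ∑' n : ℕ, ∑' k : ℕ, F (n, k) := by
        refine tsum_congr fun n ↦ ?_
        rcases Nat.eq_zero_or_pos n with rfl | hn
        · simp [hF, ArithmeticFunction.map_zero]
        have hxn : ‖x ^ n‖ < 1 := by
          rw [norm_pow]
          exact pow_lt_one₀ (norm_nonneg x) hx hn.ne'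
        have hsf : Summable fun k ↦ F (n, k) := hFsum.prod_factor n
        have key : ∀ k : ℕ, F (n, k + 1) =
            ((ArithmeticFunction.moebius n : ℂ) * x ^ n) * (x ^ n) ^ k := by
          intro k
          simp only [hF]
          rw [if_neg (Nat.succ_ne_zero k), pow_mul, pow_succ']
          ring
        have h0 : F (n, 0) = 0 := by simp [hF]
        have htail : ∑' k : ℕ, F (n, k + 1) =
            (ArithmeticFunction.moebius n : ℂ) * x ^ n * (1 - x ^ n)⁻¹ := by
          calc ∑' k : ℕ, F (n, k + 1)
              = ∑' k : ℕ, ((ArithmeticFunction.moebius n : ℂ) * x ^ n) * (x ^ n) ^ k :=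
                tsum_congr key
            _ = _ := by rw [tsum_mul_left, tsum_geometric_of_norm_lt_one hxn]
        rw [hsf.tsum_eq_zero_add, h0, zero_add, htail, div_eq_mul_inv]
    _ = ∑' p : ℕ × ℕ, F p := hFsum.tsum_prod.symm
    _ = ∑' m : ℕ, ∑' p : (fun p : ℕ × ℕ ↦ p.1 * p.2) ⁻¹' {m}, F p :=
        (hFsum.hasSum.tsum_fiberwise (fun p ↦ p.1 * p.2)).tsum_eq.symm
    _ = ∑' m : ℕ, if m = 1 then x else 0 := by
        refine tsum_congr fun m ↦ ?_
        rcases eq_or_ne m 0 with rfl | hm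
        · have hz : ∀ p : (fun p : ℕ × ℕ ↦ p.1 * p.2) ⁻¹' {0}, F p = 0 := by
            rintro ⟨⟨p₁, p₂⟩, hp⟩
            simp only [Set.mem_preimage, Set.mem_singleton_iff, Nat.mul_eq_zero] at hp
            rcases hp with rfl | rfl
            · simp [hF, ArithmeticFunction.map_zero]
            · simp [hF]
          simp only [hz, tsum_zero]
          simp
        · rw [show (fun p : ℕ × ℕ ↦ p.1 * p.2) ⁻¹' {m} = m.divisorsAntidiagonal by
            ext p; simp [Nat.mem_divisorsAntidiagonal, hm, eq_comm],
            Finset.tsum_subtype' m.divisorsAntidiagonal F]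
          have step : ∀ p ∈ m.divisorsAntidiagonal,
              F p = (ArithmeticFunction.moebius p.1 : ℂ) * x ^ m := by
            intro p hp
            obtain ⟨hpm, hm0⟩ := Nat.mem_divisorsAntidiagonal.mp hp
            have hp2 : p.2 ≠ 0 := fun h ↦ hm0 (by rw [← hpm, h, mul_zero])
            simp only [hF, if_neg hp2, hpm]
          rw [Finset.sum_congr rfl step, ← Finset.sum_mul]
          have hmu : (∑ p ∈ m.divisorsAntidiagonal, (ArithmeticFunction.moebius p.1 : ℂ))
              = if m = 1 then 1 else 0 := by
            have h1 : ((ArithmeticFunction.moebius * ArithmeticFunction.zeta :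
                ArithmeticFunction ℂ)) m = if m = 1 then 1 else 0 := by
              rw [ArithmeticFunction.coe_moebius_mul_coe_zeta]
              simp [ArithmeticFunction.one_apply]
            rw [ArithmeticFunction.mul_apply] at h1
            rw [← h1]
            refine Finset.sum_congr rfl fun p hp ↦ ?_
            obtain ⟨hpm, hm0⟩ := Nat.mem_divisorsAntidiagonal.mp hp
            have hp2 : p.2 ≠ 0 := fun h ↦ hm0 (by rw [← hpm, h, mul_zero])
            simp [ArithmeticFunction.natCoe_apply, ArithmeticFunction.zeta_apply, hp2]
          rw [hmu]
          split <;> simp_all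
    _ = x := tsum_ite_eq 1 (fun _ ↦ x)

theorem moebius_plus_one (x : ℂ) (hx : ‖x‖ < 1) :
    ∑' n : ℕ, (ArithmeticFunction.moebius n : ℂ) * x ^ n / (x ^ n + 1) = x - 2 * x ^ 2 := by
  have hx2 : ‖x ^ 2‖ < 1 := by
    rw [norm_pow]
    nlinarith [norm_nonneg x]
  have key : ∀ n : ℕ, (ArithmeticFunction.moebius n : ℂ) * x ^ n / (x ^ n + 1) =
      (ArithmeticFunction.moebius n : ℂ) * x ^ n / (1 - x ^ n)
        - 2 * ((ArithmeticFunction.moebius n : ℂ) * (x ^ 2) ^ n / (1 - (x ^ 2) ^ n)) := by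
    intro n
    rcases Nat.eq_zero_or_pos n with rfl | hn
    · simp [ArithmeticFunction.map_zero]
    have hxn : ‖x ^ n‖ < 1 := by
      rw [norm_pow]
      exact pow_lt_one₀ (norm_nonneg x) hx hn.ne'
    have h1 : (1 : ℂ) - x ^ n ≠ 0 := by
      intro h
      have hh : x ^ n = 1 := by linear_combination -h
      rw [hh] at hxn; simp at hxn
    have h2 : x ^ n + 1 ≠ 0 := by
      intro h
      have hh : x ^ n = -1 := by linear_combination h
      rw [hh] at hxn; simp at hxn
    have h3 : (1 : ℂ) - (x ^ 2) ^ n ≠ 0 := by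
      have hh : (x ^ 2) ^ n = x ^ n * x ^ n := by rw [← pow_mul, two_mul, pow_add]
      rw [hh, show (1 : ℂ) - x ^ n * x ^ n = (1 - x ^ n) * (x ^ n + 1) by ring]
      exact mul_ne_zero h1 h2
    field_simp
    ring
  rw [tsum_congr key,
    Summable.tsum_sub (moebius_summable_aux x hx)
      ((moebius_summable_aux (x ^ 2) hx2).mul_left 2),
    moebius_lambert x hx, tsum_mul_left, moebius_lambert (x ^ 2) hx2]
end
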